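/- arXiv:1806.02928 — 3 statements merged into one kernel-verified Lean document; each statement's English description precedes it below -/
import Mathlib

section
/- Let (p_i/q_i)_{i≥1} be a sequence of reduced fractions with strictly increasing positive denominators q_i, such that p_{i+1} q_i − p_i q_{i+1} = (−1)^{i+1} for all i ≥ 1. Then the sequence (p_i/q_i) converges to a real number ξ, and the fractions p_i/q_i are precisely the convergents of the continued fraction expansion of ξ whose denominators are at least q_1, listed consecutively. -/
namespace Stmt3Aux

def PP (A : ℕ → ℤ) : ℕ → ℤ
  | 0 => 1
  | 1 => A 0
  | (n+2) => A (n+1) * PP A (n+1) + PP A n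

def QQ (A : ℕ → ℤ) : ℕ → ℤ
  | 0 => 0
  | 1 => 1
  | (n+2) => A (n+1) * QQ A (n+1) + QQ A n

lemma PP_congr {A A' : ℕ → ℤ} : ∀ {n : ℕ}, (∀ m, m < n → A m = A' m) → PP A n = PP A' n
  | 0, _ => rfl
  | 1, h => by simp [PP, h 0 one_pos]
  | (n+2), h => by
      rw [PP, PP, h (n+1) (by omega), PP_congr (fun m hm => h m (by omega)),
        PP_congr (fun m hm => h m (by omega))]

lemma QQ_congr {A A' : ℕ → ℤ} : ∀ {n : ℕ}, (∀ m, m < n → A m = A' m) → QQ A n = QQ A' n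
  | 0, _ => rfl
  | 1, _ => rfl
  | (n+2), h => by
      rw [QQ, QQ, h (n+1) (by omega), QQ_congr (fun m hm => h m (by omega)),
        QQ_congr (fun m hm => h m (by omega))]

lemma det (A : ℕ → ℤ) : ∀ n : ℕ, PP A (n+1) * QQ A n - PP A n * QQ A (n+1) = (-1)^(n+1)
  | 0 => by simp [PP, QQ]
  | (n+1) => by
      have ih := det A n
      show PP A (n+2) * QQ A (n+1) - PP A (n+1) * QQ A (n+2) = (-1)^(n+2)
      rw [PP, QQ, pow_succ]
      linear_combination -ih

section

variable {A : ℕ → ℤ} (hA : ∀ n, 1 ≤ n → 1 ≤ A n)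
include hA

lemma QQ_pos : ∀ n, 1 ≤ n → 1 ≤ QQ A n
  | 1, _ => le_refl _
  | (n+2), _ => by
      have h1 : 1 ≤ QQ A (n+1) := QQ_pos (n+1) (by omega)
      have h0 : 0 ≤ QQ A n := by
        rcases Nat.eq_zero_or_pos n with h | h
        · simp [h, QQ]
        · exact le_trans zero_le_one (QQ_pos n h)
      have hAn : 1 ≤ A (n+1) := hA (n+1) (by omega)
      rw [QQ]; nlinarith

lemma QQ_nonneg (n : ℕ) : 0 ≤ QQ A n := by
  rcases Nat.eq_zero_or_pos n with h | h
  · simp [h, QQ]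
  · exact le_trans zero_le_one (QQ_pos hA n h)

lemma QQ_mono : ∀ n : ℕ, QQ A n ≤ QQ A (n+1)
  | 0 => by simp [QQ]
  | (n+1) => by
      have h1 : 1 ≤ QQ A (n+1) := QQ_pos hA (n+1) (by omega)
      have h0 : 0 ≤ QQ A n := QQ_nonneg hA n
      have hAn : 1 ≤ A (n+1) := hA (n+1) (by omega)
      show QQ A (n+1) ≤ QQ A (n+2)
      rw [QQ]; nlinarith

lemma QQ_mono_le {m n : ℕ} (h : m ≤ n) : QQ A m ≤ QQ A n := by
  induction n with
  | zero => simp_all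
  | succ n ih =>
      rcases Nat.lt_or_ge m (n+1) with h' | h'
      · exact le_trans (ih (by omega)) (QQ_mono hA n)
      · have : m = n + 1 := by omega
        simp [this]

/-- the two-step strict increase -/
lemma QQ_strict2 (n : ℕ) : QQ A (n+1) < QQ A (n+3) := by
  have h1 : 1 ≤ QQ A (n+2) := QQ_pos hA (n+2) (by omega)
  have hAn : 1 ≤ A (n+2) := hA (n+2) (by omega)
  show QQ A (n+1) < QQ A ((n+1)+2)
  rw [QQ]; nlinarith

end

lemma back : ∀ (q : ℕ) (s : ℕ), s < q → ∀ (p r ε : ℤ), (ε = 1 ∨ ε = -1) →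
    p * (s : ℤ) - r * (q : ℤ) = ε → (s = 0 → ε = -1) →
    ∃ (k : ℕ) (A : ℕ → ℤ), (∀ n, 1 ≤ n → 1 ≤ A n) ∧
      PP A k = r ∧ QQ A k = (s : ℤ) ∧ PP A (k+1) = p ∧ QQ A (k+1) = (q : ℤ) := by
  intro q
  induction q using Nat.strong_induction_on with
  | _ q IH =>
    intro s hsq p r ε hε hdet hs0
    rcases Nat.eq_zero_or_pos s with hs | hs
    · -- bottom case
      have hε' : ε = -1 := hs0 hs
      subst hε'
      subst hs
      have h1 : r * (q:ℤ) = 1 := by push_cast at hdet; linarith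
      have hq1 : (q:ℤ) = 1 := Int.eq_one_of_dvd_one (by positivity) ⟨r, by linarith [h1]⟩
      have hr1 : r = 1 := by nlinarith
      refine ⟨0, fun n => if n = 0 then p else 1,
        fun n hn => by simp [Nat.pos_iff_ne_zero.mp hn], ?_, ?_, ?_, ?_⟩
      · simp [PP, hr1]
      · simp [QQ]
      · simp [PP]
      · simp [QQ, hq1]
    · -- s ≥ 1
      by_cases hcase : s = 1 ∧ ε = -1
      · -- special parity-fix case
        obtain ⟨hs1, hε1⟩ := hcase
        subst hs1 hε1
        have hq2 : 2 ≤ q := hsq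
        have hq2' : (2:ℤ) ≤ (q:ℤ) := by exact_mod_cast hq2
        have hp : p = r * q - 1 := by push_cast at hdet ⊢; linarith
        refine ⟨2, fun n => if n = 0 then r - 1 else if n = 2 then (q:ℤ) - 1 else 1,
          fun n hn => ?_, ?_, ?_, ?_, ?_⟩
        · by_cases h2 : n = 2 <;> simp [h2, Nat.pos_iff_ne_zero.mp hn] <;> omega
        · show PP _ 2 = r
          norm_num [PP]
        · show QQ _ 2 = ((1:ℕ) : ℤ)
          norm_num [QQ]
        · show PP _ 3 = p
          norm_num [PP, hp]; ring
        · show QQ _ 3 = (q : ℤ)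
          norm_num [QQ]
      · -- generic descent
        have ha : 1 ≤ q / s := (Nat.one_le_div_iff hs).mpr (le_of_lt hsq)
        set a : ℕ := q / s with ha_def
        set s' : ℕ := q % s with hs'_def
        have hqas : q = a * s + s' := by rw [ha_def, hs'_def, Nat.mul_comm]; exact (Nat.div_add_mod q s).symm
        have hs's : s' < s := Nat.mod_lt _ hs
        have hdet' : r * (s' : ℤ) - (p - a * r) * (s : ℤ) = -ε := by
          have hcast : (s' : ℤ) = (q : ℤ) - a * s := by push_cast [hqas]; ring
          rw [hcast]; linarith [hdet]
        have hside : s' = 0 → -ε = -1 := by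
          intro h0
          have hsq' : (s:ℤ) ∣ (q:ℤ) :=
            Int.natCast_dvd_natCast.mpr (Nat.dvd_of_mod_eq_zero (by omega))
          have hsdvd : (s:ℤ) ∣ ε :=
            hdet ▸ dvd_sub (dvd_mul_left _ _) (hsq'.mul_left r)
          have hs1' : (s:ℤ) ∣ 1 := by
            rcases hε with h | h
            · rwa [h] at hsdvd
            · rw [h] at hsdvd; exact (dvd_neg.mp hsdvd)
          have hsle : (s:ℤ) ≤ 1 := Int.le_of_dvd one_pos hs1'
          have : s = 1 := by exact_mod_cast le_antisymm (by exact_mod_cast hsle) hs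
          rcases hε with h | h
          · simp [h]
          · exact absurd ⟨this, h⟩ hcase
        obtain ⟨k', A', hA', hP0, hQ0, hP1, hQ1⟩ :=
          IH s hsq s' hs's r (p - a * r) (-ε) (by rcases hε with h|h <;> simp [h]) hdet' hside
        set B : ℕ → ℤ := fun n => if n = k' + 1 then (a : ℤ) else A' n with hB
        have hBlow : ∀ m, m < k' + 1 → B m = A' m := fun m hm => by
          simp [hB, Nat.ne_of_lt hm]
        have eP1 : PP B (k'+1) = r := by rw [PP_congr hBlow]; exact hP1
        have eQ1 : QQ B (k'+1) = (s:ℤ) := by rw [QQ_congr hBlow]; exact hQ1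
        have eP0 : PP B k' = p - a * r := by
          rw [PP_congr (fun m hm => hBlow m (by omega))]; exact hP0
        have eQ0 : QQ B k' = (s':ℤ) := by
          rw [QQ_congr (fun m hm => hBlow m (by omega))]; exact hQ0
        have eB : B (k'+1) = (a:ℤ) := by simp [hB]
        refine ⟨k' + 1, B, fun n hn => ?_, ?_, ?_, ?_, ?_⟩
        · by_cases h : n = k' + 1
          · simp [hB, h]; exact_mod_cast ha
          · simp [hB, h]; exact hA' n hn
        · exact eP1
        · exact eQ1
        · show PP B (k'+2) = p
          rw [PP, eB, eP1, eP0]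
          ring
        · show QQ B (k'+2) = (q:ℤ)
          rw [QQ, eB, eQ1, eQ0]
          push_cast [hqas]
          ring

lemma floor_add_inv (B0 : ℤ) (t : ℝ) (ht : 1 < t) : ⌊(B0:ℝ) + 1/t⌋ = B0 := by
  have h0 : 0 < 1/t := by positivity
  have h1 : 1/t < 1 := by rw [div_lt_one (by linarith)]; linarith
  rw [Int.floor_eq_iff]
  refine ⟨by linarith, by push_cast; linarith⟩

lemma fract_eq (B0 : ℤ) (t : ℝ) (ht : 1 < t) : Int.fract ((B0:ℝ) + 1/t) = 1/t := by
  rw [Int.fract, floor_add_inv B0 t ht]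
  push_cast; ring

lemma of_h (B : ℕ → ℤ) (T : ℕ → ℝ) (v : ℝ) (hT : ∀ m, 1 < T m)
    (hv : v = B 0 + 1/T 0) : (GenContFract.of v).h = (B 0 : ℝ) := by
  rw [GenContFract.of_h_eq_floor, hv, floor_add_inv _ _ (hT 0)]

lemma of_stream : ∀ (n : ℕ) (B : ℕ → ℤ) (T : ℕ → ℝ) (v : ℝ),
    (∀ m, 1 < T m) → (∀ m, T m = B (m+1) + 1/T (m+1)) → v = B 0 + 1/T 0 →
    (GenContFract.of v).s.get? n = some ⟨1, (B (n+1) : ℝ)⟩ := by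
  intro n
  induction n with
  | zero =>
      intro B T v hT hrel hv
      have hfr : Int.fract v = 1/T 0 := by rw [hv]; exact fract_eq _ _ (hT 0)
      have hne : Int.fract v ≠ 0 := by
        rw [hfr]; exact one_div_ne_zero (by linarith [hT 0])
      have : (GenContFract.of v).s.head = some ⟨1, (⌊(Int.fract v)⁻¹⌋ : ℝ)⟩ :=
        GenContFract.of_s_head hne
      rw [show (GenContFract.of v).s.get? 0 = (GenContFract.of v).s.head from rfl, this]
      have : (Int.fract v)⁻¹ = T 0 := by rw [hfr]; simp
      rw [this, hrel 0, floor_add_inv _ _ (hT 1)]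
  | succ n ih =>
      intro B T v hT hrel hv
      have hfr : Int.fract v = 1/T 0 := by rw [hv]; exact fract_eq _ _ (hT 0)
      rw [GenContFract.of_s_succ]
      have hinv : (Int.fract v)⁻¹ = T 0 := by rw [hfr]; simp
      rw [hinv]
      exact ih (fun m => B (m+1)) (fun m => T (m+1)) (T 0) (fun m => hT (m+1))
        (fun m => hrel (m+1)) (hrel 0)

lemma of_nums_dens (v : ℝ) (A : ℕ → ℤ)
    (hs : ∀ n, (GenContFract.of v).s.get? n = some ⟨1, (A (n+1) : ℝ)⟩)
    (hh : (GenContFract.of v).h = (A 0 : ℝ)) :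
    ∀ n, (GenContFract.of v).nums n = (PP A (n+1) : ℝ) ∧
      (GenContFract.of v).dens n = (QQ A (n+1) : ℝ)
  | 0 => by
      constructor
      · rw [GenContFract.zeroth_num_eq_h, hh]; simp [PP]
      · rw [GenContFract.zeroth_den_eq_one]; simp [QQ]
  | 1 => by
      constructor
      · rw [GenContFract.first_num_eq (hs 0)]
        show (A 1 : ℝ) * _ + (1:ℝ) = _
        rw [hh]
        push_cast [PP]
        ring
      · rw [GenContFract.first_den_eq (hs 0)]
        show (A 1 : ℝ) = _
        push_cast [QQ]
        ring
  | (n+2) => by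
      obtain ⟨hN1, hD1⟩ := of_nums_dens v A hs hh (n+1)
      obtain ⟨hN0, hD0⟩ := of_nums_dens v A hs hh n
      constructor
      · rw [GenContFract.nums_recurrence (hs (n+1)) hN0 hN1]
        show (A (n+2) : ℝ) * _ + (1:ℝ) * _ = ((PP A (n+3) : ℤ) : ℝ)
        push_cast [PP]
        ring
      · rw [GenContFract.dens_recurrence (hs (n+1)) hD0 hD1]
        show (A (n+2) : ℝ) * _ + (1:ℝ) * _ = ((QQ A (n+3) : ℤ) : ℝ)
        push_cast [QQ]
        ring

end Stmt3Aux

open Stmt3Aux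

set_option maxHeartbeats 1600000

/-- if `(p_i/q_i)_{i≥1}` are reduced fractions with strictly increasing
positive denominators satisfying `p_{i+1} q_i − p_i q_{i+1} = (−1)^{i+1}`, then
`p_i/q_i` converges to a real number `ξ`, and the `p_i/q_i` are exactly the
convergents of the continued fraction expansion of `ξ` whose denominators are at
least `q 1`, listed consecutively (i.e. they form a tail, starting at some index `k`,
of the convergent sequence of `ξ`, and all earlier convergents have denominator
smaller than `q 1`). -/
theorem stmt3 (p : ℕ → ℤ) (q : ℕ → ℕ)
    (hq_pos : ∀ i ≥ 1, 0 < q i)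
    (hq_mono : ∀ i ≥ 1, q i < q (i + 1))
    (hred : ∀ i ≥ 1, Nat.Coprime (p i).natAbs (q i))
    (hdet : ∀ i ≥ 1, p (i + 1) * (q i : ℤ) - p i * (q (i + 1) : ℤ) = (-1) ^ (i + 1)) :
    ∃ ξ : ℝ,
      Filter.Tendsto (fun i => (p i : ℝ) / (q i : ℝ)) Filter.atTop (nhds ξ) ∧
      ∃ k : ℕ,
        (∀ i ≥ 1, (GenContFract.of ξ).convs (k + (i - 1)) = (p i : ℝ) / (q i : ℝ) ∧
          (GenContFract.of ξ).dens (k + (i - 1)) = (q i : ℝ)) ∧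
        (∀ n < k, (GenContFract.of ξ).dens n < (q 1 : ℝ)) := by
  classical
  have hq1 : 0 < q 1 := hq_pos 1 le_rfl
  have hq12 : q 1 < q 2 := hq_mono 1 le_rfl
  set s0 : ℕ := q 2 % q 1 with hs0_def
  set a0 : ℕ := q 2 / q 1 with ha0_def
  have ha0 : 1 ≤ a0 := (Nat.one_le_div_iff hq1).mpr (le_of_lt hq12)
  set r0 : ℤ := p 2 - (a0:ℤ) * p 1 with hr0_def
  have hdm : q 1 * a0 + s0 = q 2 := by rw [ha0_def, hs0_def]; exact Nat.div_add_mod _ _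
  have hdet1 : p 2 * (q 1:ℤ) - p 1 * (q 2:ℤ) = 1 := by
    have h := hdet 1 le_rfl; norm_num at h; exact h
  have hback_det : p 1 * (s0:ℤ) - r0 * (q 1 : ℤ) = -1 := by
    have hcast : (s0:ℤ) = (q 2:ℤ) - (q 1:ℤ) * a0 := by
      push_cast [← hdm]; ring
    rw [hr0_def, hcast]; linarith [hdet1]
  obtain ⟨k, Ab, hAb, hPbk, hQbk, hPbk1, hQbk1⟩ :=
    back (q 1) s0 (Nat.mod_lt _ hq1) (p 1) r0 (-1) (Or.inr rfl) hback_det (fun _ => rfl)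
  -- forward partial quotients
  set B : ℕ → ℤ := fun i => if i = 0 then (a0 : ℤ) else ((q (i+2):ℤ) - (q i:ℤ)) / (q (i+1):ℤ)
    with hB_def
  have hkey : ∀ i, 1 ≤ i →
      1 ≤ B i ∧ (q (i+2) : ℤ) = B i * (q (i+1):ℤ) + (q i:ℤ) ∧
        p (i+2) = B i * p (i+1) + p i := by
    intro i hi
    have hqi1 : 0 < q (i+1) := hq_pos (i+1) (by omega)
    have hqi1z : ((q (i+1):ℤ)) ≠ 0 := by positivity
    have hlt1 : q i < q (i+1) := hq_mono i hi
    have hlt2 : q (i+1) < q (i+2) := hq_mono (i+1) (by omega)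
    have d1 := hdet i hi
    have d2 : p (i+2) * (q (i+1):ℤ) - p (i+1) * (q (i+2):ℤ) = -((-1:ℤ)^(i+1)) := by
      have h := hdet (i+1) (by omega)
      rw [pow_succ] at h; linarith [h]
    have hmul : (q (i+1):ℤ) * (p (i+2) - p i) = p (i+1) * ((q (i+2):ℤ) - (q i:ℤ)) := by
      linarith [d1, d2]
    have hcop : IsCoprime ((q (i+1):ℤ)) (p (i+1)) := by
      rw [Int.isCoprime_iff_gcd_eq_one, Int.gcd]
      simp only [Int.natAbs_natCast]
      exact (hred (i+1) (by omega)).symm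
    have hdvd : ((q (i+1):ℤ)) ∣ ((q (i+2):ℤ) - (q i:ℤ)) := by
      apply hcop.dvd_of_dvd_mul_left
      exact ⟨p (i+2) - p i, by linarith [hmul]⟩
    obtain ⟨e, he⟩ := hdvd
    have hBe : B i = e := by
      rw [hB_def]
      simp only [if_neg (by omega : ¬ i = 0)]
      rw [he, Int.mul_ediv_cancel_left _ hqi1z]
    have he1 : 1 ≤ e := by
      have hpos : (0:ℤ) < (q (i+2):ℤ) - (q i:ℤ) := by
        have h := lt_trans hlt1 hlt2
        omega
      nlinarith [he, hpos, (by exact_mod_cast hqi1 : (0:ℤ) < (q (i+1):ℤ))]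
    refine ⟨hBe ▸ he1, by rw [hBe]; linarith [he], ?_⟩
    have : p (i+2) - p i = p (i+1) * e := by
      have h2 : (q (i+1):ℤ) * (p (i+2) - p i) = (q (i+1):ℤ) * (p (i+1) * e) := by
        rw [hmul, he]; ring
      exact mul_left_cancel₀ hqi1z h2
    rw [hBe]; linarith [this]
  -- the full quotient sequence
  set A : ℕ → ℤ := fun n => if n ≤ k then Ab n else B (n - (k+1)) with hA_def
  have hAlow : ∀ m, m ≤ k → A m = Ab m := fun m hm => by
    simp only [hA_def]; rw [if_pos hm]
  have hA : ∀ n, 1 ≤ n → 1 ≤ A n := by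
    intro n hn
    by_cases h : n ≤ k
    · rw [hAlow n h]; exact hAb n hn
    · simp only [hA_def]; rw [if_neg h]
      rcases Nat.eq_zero_or_pos (n - (k+1)) with h0 | h0
      · rw [h0, hB_def]; simp; exact_mod_cast ha0
      · exact (hkey _ h0).1
  have hAk1 : A (k+1) = (a0:ℤ) := by
    simp only [hA_def]; rw [if_neg (by omega)]
    simp [hB_def]
  have hAk1i : ∀ i, 1 ≤ i → A (k+1+i) = B i := by
    intro i hi
    simp only [hA_def]; rw [if_neg (by omega)]
    congr 1; omega
  have hPk1 : PP A (k+1) = p 1 := by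
    rw [PP_congr (fun m hm => hAlow m (by omega))]; exact hPbk1
  have hQk1 : QQ A (k+1) = (q 1:ℤ) := by
    rw [QQ_congr (fun m hm => hAlow m (by omega))]; exact hQbk1
  have hPk : PP A k = r0 := by
    rw [PP_congr (fun m hm => hAlow m (by omega))]; exact hPbk
  have hQk : QQ A k = (s0:ℤ) := by
    rw [QQ_congr (fun m hm => hAlow m (by omega))]; exact hQbk
  clear_value A B r0 a0 s0
  -- main forward identification
  have main1 : ∀ i, 1 ≤ i →
      PP A (k+i) = p i ∧ QQ A (k+i) = (q i:ℤ) ∧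
      PP A (k+i+1) = p (i+1) ∧ QQ A (k+i+1) = (q (i+1):ℤ) := by
    intro i hi
    induction i, hi using Nat.le_induction with
    | base =>
        refine ⟨hPk1, hQk1, ?_, ?_⟩
        · show PP A (k+2) = p 2
          rw [PP, hAk1, hPk1, hPk, hr0_def]; ring
        · show QQ A (k+2) = (q 2:ℤ)
          rw [QQ, hAk1, hQk1, hQk]
          push_cast [← hdm]; ring
    | succ i hi ih =>
        obtain ⟨hP0, hQ0, hP1, hQ1⟩ := ih
        refine ⟨hP1, hQ1, ?_, ?_⟩
        · show PP A ((k+i)+2) = p (i+2)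
          rw [PP, show (k+i)+1 = k+1+i by omega, hAk1i i hi,
            show k+1+i = k+i+1 by omega, hP1, hP0]
          exact ((hkey i hi).2.2).symm
        · show QQ A ((k+i)+2) = (q (i+2):ℤ)
          rw [QQ, show (k+i)+1 = k+1+i by omega, hAk1i i hi,
            show k+1+i = k+i+1 by omega, hQ1, hQ0]
          exact ((hkey i hi).2.1).symm
  -- ANALYTIC PART
  have hQpos : ∀ n, 1 ≤ n → 1 ≤ QQ A n := fun n hn => QQ_pos hA n hn
  have hQR : ∀ n, 1 ≤ n → (0:ℝ) < (QQ A n : ℝ) := by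
    intro n hn
    have h := hQpos n hn
    exact_mod_cast lt_of_lt_of_le zero_lt_one (by exact_mod_cast h)
  set c : ℕ → ℝ := fun m => (PP A (m+1) : ℝ) / (QQ A (m+1) : ℝ) with hc_def
  clear_value c
  set R : ℕ → ℤ := fun m => QQ A (m+1) * QQ A (m+2) with hR_def
  clear_value R
  have hRpos : ∀ m, (0:ℤ) < R m := by
    intro m
    have h1 := hQpos (m+1) (by omega)
    have h2 := hQpos (m+2) (by omega)
    simp only [hR_def]; nlinarith
  have hRposR : ∀ m, (0:ℝ) < (R m : ℝ) := fun m => by exact_mod_cast hRpos m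
  have cdiff : ∀ m, c (m+1) - c m = (-1:ℝ)^m / (R m : ℝ) := by
    intro m
    have h1 := hQR (m+1) (by omega)
    have h2 := hQR (m+2) (by omega)
    have hd := det A (m+1)
    have h' : ((-1:ℤ))^(m+1+1) = (-1)^m := by rw [pow_succ, pow_succ]; ring
    rw [h'] at hd
    have hdR : (PP A (m+2):ℝ) * (QQ A (m+1):ℝ) - (PP A (m+1):ℝ)*(QQ A (m+2):ℝ)
        = (-1:ℝ)^m := by exact_mod_cast hd
    have e2 : ((R m : ℤ):ℝ) = (QQ A (m+2):ℝ)*(QQ A (m+1):ℝ) := by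
      simp only [hR_def]; push_cast; ring
    rw [hc_def]
    show (PP A (m+2):ℝ)/(QQ A (m+2):ℝ) - (PP A (m+1):ℝ)/(QQ A (m+1):ℝ) = _
    rw [div_sub_div _ _ (ne_of_gt h2) (ne_of_gt h1), e2]
    congr 1
    linarith [hdR]
  have hRmono : ∀ m, R m < R (m+1) := by
    intro m
    have h1 := hQpos (m+1) (by omega)
    have h2 := hQpos (m+2) (by omega)
    have h3 := QQ_strict2 hA m
    have hQm2 : (0:ℤ) < QQ A (m+2) := by omega
    have h4 := mul_lt_mul_of_pos_left h3 hQm2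
    simp only [hR_def]
    show QQ A (m+1) * QQ A (m+2) < QQ A (m+2) * QQ A (m+3)
    rw [mul_comm]
    exact h4
  have hRge : ∀ m : ℕ, (m:ℤ) + 1 ≤ R m := by
    intro m
    induction m with
    | zero => have := hRpos 0; omega
    | succ m ih => have := hRmono m; push_cast; omega
  set Ev : ℕ → ℝ := fun j => c (2*j) with hEv_def
  clear_value Ev
  set Od : ℕ → ℝ := fun j => c (2*j+1) with hOd_def
  clear_value Od
  have hcc : ∀ a b : ℕ, a = b → c a = c b := fun a b h => by rw [h]
  have hcEv : ∀ j, Ev j = c (2*j) := fun j => by simp only [hEv_def]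
  have hcOd : ∀ j, Od j = c (2*j+1) := fun j => by simp only [hOd_def]
  have hgap : ∀ j, Od j - Ev j = 1 / (R (2*j) : ℝ) := by
    intro j
    have h := cdiff (2*j)
    rw [Even.neg_one_pow (even_two_mul j)] at h
    simpa [hEv_def, hOd_def] using h
  have hgap2 : ∀ j, c (2*j+2) - c (2*j+1) = -(1 / (R (2*j+1) : ℝ)) := by
    intro j
    have h := cdiff (2*j+1)
    rw [Odd.neg_one_pow (odd_two_mul_add_one j)] at h
    rw [h]; ring
  have hRstrictR : ∀ m, (1:ℝ) / (R (m+1):ℝ) < 1 / (R m : ℝ) := by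
    intro m
    apply one_div_lt_one_div_of_lt (hRposR m)
    exact_mod_cast hRmono m
  have hEvmono : StrictMono Ev := by
    apply strictMono_nat_of_lt_succ
    intro j
    have e1 := hgap j
    have e2 := hgap2 j
    have e3 : Ev (j+1) = c (2*j+2) := by rw [hcEv]; exact hcc _ _ (by omega)
    have e4 : Ev j = c (2*j) := hcEv j
    have e5 : Od j = c (2*j+1) := hcOd j
    rw [e3, e4]
    rw [e4, e5] at e1
    have h6 := hRstrictR (2*j)
    linarith [e1, e2, h6, hRposR (2*j+1)]
  have hOdanti : StrictAnti Od := by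
    apply strictAnti_nat_of_succ_lt
    intro j
    have e1 := hgap (j+1)
    have e2 := hgap2 j
    have h5 : Ev (j+1) = c (2*j+2) := by rw [hcEv]; exact hcc _ _ (by omega)
    have e5 : Od (j+1) = c (2*j+3) := by rw [hcOd]; exact hcc _ _ (by omega)
    have e6 : Od j = c (2*j+1) := hcOd j
    have g2 := cdiff (2*j+2)
    rw [Even.neg_one_pow (⟨j+1, by omega⟩ : Even (2*j+2))] at g2
    have g2' : c (2*j+3) - c (2*j+2) = 1 / (R (2*j+2) : ℝ) := by
      rw [hcc (2*j+3) (2*j+2+1) (by omega)]; exact g2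
    have g1 : (1:ℝ) / (R (2*j+2):ℝ) < 1 / (R (2*j+1) : ℝ) := by
      apply one_div_lt_one_div_of_lt (hRposR (2*j+1))
      exact_mod_cast hRmono (2*j+1)
    rw [e5, e6]
    linarith [g2', e2, g1]
  have hEvOd : ∀ j l, Ev j < Od l := by
    intro j l
    have h1 : Ev j ≤ Ev (max j l) := hEvmono.monotone (le_max_left j l)
    have h2 : Od (max j l) ≤ Od l := hOdanti.antitone (le_max_right j l)
    have h3 : Ev (max j l) < Od (max j l) := by
      have h4 := hgap (max j l)
      have h5 : (0:ℝ) < 1 / (R (2 * max j l) : ℝ) := one_div_pos.mpr (hRposR (2 * max j l))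
      linarith
    linarith
  have hbdd : BddAbove (Set.range Ev) := by
    refine ⟨Od 0, ?_⟩
    rintro x ⟨j, rfl⟩
    exact le_of_lt (hEvOd j 0)
  set ξ : ℝ := ⨆ j, Ev j with hxi_def
  clear_value ξ
  have hEvle : ∀ j, Ev j ≤ ξ := fun j => by rw [hxi_def]; exact le_ciSup hbdd j
  have hxiOd : ∀ j, ξ ≤ Od j := fun j => by
    rw [hxi_def]; exact ciSup_le (fun i => le_of_lt (hEvOd i j))
  have hEvlt : ∀ j, Ev j < ξ := fun j => lt_of_lt_of_le (hEvmono (by omega : j < j+1)) (hEvle (j+1))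
  have hOdgt : ∀ j, ξ < Od j := fun j => lt_of_le_of_lt (hxiOd (j+1)) (hOdanti (by omega : j < j+1))
  -- convergence of c to ξ
  have hker : ∀ m, |c m - ξ| ≤ 1 / ((2*(m/2)+1 : ℕ) : ℝ) := by
    intro m
    have hb : |c m - ξ| ≤ Od (m/2) - Ev (m/2) := by
      rcases Nat.even_or_odd m with ⟨j, hj⟩ | ⟨j, hj⟩
      · have hm2 : m/2 = j := by omega
        have hcm : c m = Ev j := by rw [hcEv]; exact hcc _ _ (by omega)
        rw [hm2, hcm, abs_sub_comm]
        have h0 : 0 ≤ ξ - Ev j := by linarith [hEvle j]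
        rw [abs_of_nonneg h0]
        linarith [hxiOd j]
      · have hm2 : m/2 = j := by omega
        have hcm : c m = Od j := by rw [hcOd]; exact hcc _ _ (by omega)
        rw [hm2, hcm]
        have h0 : 0 ≤ Od j - ξ := by linarith [hxiOd j]
        rw [abs_of_nonneg h0]
        linarith [hEvle j]
    have hb2 : Od (m/2) - Ev (m/2) = 1 / (R (2*(m/2)) : ℝ) := hgap (m/2)
    have hgen : ∀ (a : ℕ) (b : ℤ), (a:ℤ) ≤ b → (a:ℝ) ≤ (b:ℝ) := fun a b h => by
      exact_mod_cast h
    have hb3 : ((2*(m/2) + 1 : ℕ) : ℝ) ≤ (R (2*(m/2)) : ℝ) := by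
      have hz : ((2*(m/2)+1 : ℕ):ℤ) ≤ R (2*(m/2)) := by have := hRge (2*(m/2)); omega
      exact hgen _ _ hz
    have hb4 : (0:ℝ) < ((2*(m/2)+1 : ℕ) : ℝ) := by exact_mod_cast Nat.succ_pos _
    calc |c m - ξ| ≤ 1 / (R (2*(m/2)) : ℝ) := by rw [← hb2]; exact hb
      _ ≤ 1 / ((2*(m/2)+1 : ℕ) : ℝ) := one_div_le_one_div_of_le hb4 hb3
  have hctend : Filter.Tendsto c Filter.atTop (nhds ξ) := by
    rw [Metric.tendsto_atTop]
    intro ε hε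
    obtain ⟨N, hN⟩ := exists_nat_gt (1/ε)
    refine ⟨2*N+2, fun m hm => ?_⟩
    rw [Real.dist_eq]
    have h1 := hker m
    have h2 : (N:ℝ) + 1 ≤ ((2*(m/2)+1 : ℕ) : ℝ) := by
      have h2' : N + 1 ≤ 2*(m/2)+1 := by omega
      exact_mod_cast h2'
    have hN1 : (0:ℝ) < (N:ℝ)+1 := by positivity
    have h3 : 1/((2*(m/2)+1 : ℕ):ℝ) ≤ 1/((N:ℝ)+1) := one_div_le_one_div_of_le hN1 h2
    have h4 : 1/((N:ℝ)+1) < ε := by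
      rw [div_lt_iff₀ hN1]
      have h6 : 1 < (N:ℝ) * ε := (div_lt_iff₀ hε).mp hN
      nlinarith
    linarith
  -- SIGN ANALYSIS
  set F : ℕ → ℝ := fun n => (QQ A n : ℝ) * ξ - (PP A n : ℝ) with hF_def
  clear_value F
  have hFval : ∀ n, F n = (QQ A n : ℝ) * ξ - (PP A n : ℝ) := fun n => by rw [hF_def]
  set G : ℕ → ℝ := fun n => (-1:ℝ)^(n+1) * F n with hG_def
  clear_value G
  have hGval : ∀ n, G n = (-1:ℝ)^(n+1) * F n := fun n => by rw [hG_def]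
  have hG0 : G 0 = 1 := by
    rw [hGval, hFval]
    norm_num [QQ, PP]
  have hG1 : G 1 = ξ - (A 0 : ℝ) := by
    rw [hGval, hFval]
    norm_num [QQ, PP]
  have Gpos : ∀ n, 0 < G n := by
    intro n
    match n with
    | 0 => rw [hG0]; norm_num
    | (m+1) =>
        have hQ := hQR (m+1) (by omega)
        have hc' : F (m+1) = (QQ A (m+1):ℝ) * (ξ - c m) := by
          have hQne : ((QQ A (m+1):ℤ):ℝ) ≠ 0 := ne_of_gt hQ
          rw [hFval]
          simp only [hc_def]
          field_simp
        rcases Nat.even_or_odd m with ⟨j, hj⟩ | ⟨j, hj⟩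
        · have hpow : (-1:ℝ)^(m+1+1) = 1 := Even.neg_one_pow ⟨j+1, by omega⟩
          have hcm : c m = Ev j := by rw [hcEv]; exact hcc _ _ (by omega)
          have hlt := hEvlt j
          rw [hGval, hpow, hc', hcm]
          have : 0 < ξ - Ev j := by linarith
          nlinarith
        · have hpow : (-1:ℝ)^(m+1+1) = -1 := Odd.neg_one_pow ⟨j+1, by omega⟩
          have hcm : c m = Od j := by rw [hcOd]; exact hcc _ _ (by omega)
          have hlt := hOdgt j
          rw [hGval, hpow, hc', hcm]
          have : ξ - Od j < 0 := by linarith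
          nlinarith
  have hFrec : ∀ n, F (n+2) = (A (n+1):ℝ) * F (n+1) + F n := by
    intro n
    rw [hFval, hFval, hFval]
    push_cast [PP, QQ]
    ring
  have Grec : ∀ n : ℕ, G n = G (n+2) + (A (n+1):ℝ) * G (n+1) := by
    intro n
    rw [hGval, hGval, hGval, hFrec]
    ring
  have hGlt : ∀ n, G (n+1) < G n := by
    intro n
    have h1 := Gpos (n+1)
    have h2 := Gpos (n+2)
    have hA1 : (1:ℝ) ≤ (A (n+1):ℝ) := by exact_mod_cast hA (n+1) (by omega)
    have h3 := Grec n
    nlinarith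
  set T : ℕ → ℝ := fun n => G n / G (n+1) with hT_def
  clear_value T
  have hTval : ∀ n, T n = G n / G (n+1) := fun n => by rw [hT_def]
  have hT : ∀ n, 1 < T n := by
    intro n
    rw [hTval]
    exact (one_lt_div (Gpos (n+1))).mpr (hGlt n)
  have hTrel : ∀ n, T n = (A (n+1):ℝ) + 1/T (n+1) := by
    intro n
    rw [hTval, hTval, one_div_div, Grec n]
    have hne1 : G (n+1) ≠ 0 := ne_of_gt (Gpos (n+1))
    field_simp
    ring
  have hv : ξ = (A 0 : ℝ) + 1/T 0 := by
    have h1 : (1:ℝ)/T 0 = ξ - (A 0:ℝ) := by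
      rw [hTval, one_div_div, hG0, hG1, div_one]
    linarith
  -- CONNECT TO GenContFract.of
  have hh := of_h A T ξ hT hv
  have hs : ∀ n, (GenContFract.of ξ).s.get? n = some ⟨1, (A (n+1) : ℝ)⟩ :=
    fun n => of_stream n A T ξ hT hTrel hv
  have hnd := of_nums_dens ξ A hs hh
  -- CONCLUSION
  refine ⟨ξ, ?_, k, ?_, ?_⟩
  · -- convergence of p i / q i
    have hmap : Filter.Tendsto (fun i : ℕ => k + i - 1) Filter.atTop Filter.atTop :=
      Filter.tendsto_atTop_atTop.mpr (fun b => ⟨b+1, fun a ha => by omega⟩)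
    have htail : Filter.Tendsto (fun i : ℕ => c (k + i - 1)) Filter.atTop (nhds ξ) :=
      hctend.comp hmap
    apply Filter.Tendsto.congr' ?_ htail
    rw [Filter.eventuallyEq_iff_exists_mem]
    refine ⟨{i | 1 ≤ i}, Filter.mem_atTop 1, ?_⟩
    intro i hi
    simp only [Set.mem_setOf_eq] at hi
    obtain ⟨j, rfl⟩ : ∃ j, i = j+1 := ⟨i-1, by omega⟩
    have hm := main1 (j+1) (by omega)
    have h1 : PP A (k+j+1) = p (j+1) := by rw [show k+j+1 = k+(j+1) by omega]; exact hm.1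
    have h2 : QQ A (k+j+1) = ((q (j+1):ℕ):ℤ) := by
      rw [show k+j+1 = k+(j+1) by omega]; exact hm.2.1
    show c (k + (j+1) - 1) = _
    rw [hcc (k + (j+1) - 1) (k+j) (by omega)]
    simp only [hc_def]
    rw [h1, h2]
    push_cast
    ring
  · -- the convergents
    intro i hi
    obtain ⟨j, rfl⟩ : ∃ j, i = j+1 := ⟨i-1, by omega⟩
    have hm := main1 (j+1) (by omega)
    have h1 : PP A (k+j+1) = p (j+1) := by rw [show k+j+1 = k+(j+1) by omega]; exact hm.1
    have h2 : QQ A (k+j+1) = ((q (j+1):ℕ):ℤ) := by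
      rw [show k+j+1 = k+(j+1) by omega]; exact hm.2.1
    have hidx : k + (j+1-1) = k + j := by omega
    rw [hidx]
    constructor
    · rw [GenContFract.conv_eq_num_div_den, (hnd (k+j)).1, (hnd (k+j)).2, h1, h2]
      push_cast
      ring
    · rw [(hnd (k+j)).2, h2]
      push_cast
      ring
  · -- small denominators
    intro n hn
    rw [(hnd n).2]
    have hle : QQ A (n+1) ≤ QQ A k := QQ_mono_le hA (by omega)
    have hs0lt : s0 < q 1 := by rw [hs0_def]; exact Nat.mod_lt _ hq1
    have hlt : QQ A k < ((q 1:ℕ):ℤ) := by rw [hQk]; exact_mod_cast hs0lt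
    have : QQ A (n+1) < ((q 1:ℕ):ℤ) := lt_of_le_of_lt hle hlt
    exact_mod_cast this
end

section
/- Let b ≥ 3, digits 0 ≤ d_1 < d_2 ≤ b−1, u = d_2 − d_1, and write u = u_1 u_2 with u_1 the part of u whose prime factors divide b and u_2 coprime to b. Set N = φ(u_2^2 (b−1)^2), m_1 = N − 1, and S = 1 + b + ... + b^{N−1}. Then gcd(d_1 S + u, b^N − 1) = u_2. -/
/-- for `b ≥ 3`, digits `0 ≤ d₁ < d₂ ≤ b−1`, `u = d₂ − d₁ = u₁ u₂`
with every prime factor of `u₁` dividing `b` and no prime factor of `u₂` dividing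
`b`, setting `N = φ(u₂²(b−1)²)` and `S = 1 + b + ⋯ + b^{N−1}`, one has
`gcd(d₁ S + u, b^N − 1) = u₂`. -/
theorem stmt6 (b d₁ d₂ u₁ u₂ : ℕ) (hb : 3 ≤ b) (hd : d₁ < d₂) (hd₂ : d₂ ≤ b - 1)
    (hfac : d₂ - d₁ = u₁ * u₂)
    (h₁ : ∀ p : ℕ, p.Prime → p ∣ u₁ → p ∣ b)
    (h₂ : ∀ p : ℕ, p.Prime → p ∣ u₂ → ¬ p ∣ b) :
    Nat.gcd
      (d₁ * (∑ j ∈ Finset.range (Nat.totient (u₂ ^ 2 * (b - 1) ^ 2)), b ^ j) + (d₂ - d₁))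
      (b ^ Nat.totient (u₂ ^ 2 * (b - 1) ^ 2) - 1) = u₂ := by
  set n := u₂ ^ 2 * (b - 1) ^ 2 with hn
  set N := Nat.totient n with hN
  set S := ∑ j ∈ Finset.range N, b ^ j with hSdef
  set A := d₁ * S + (d₂ - d₁) with hA
  set M := b ^ N - 1 with hM
  -- basic positivity
  have hu2pos : 0 < u₂ := by
    rcases Nat.eq_zero_or_pos u₂ with h | h
    · exfalso; rw [h, mul_zero] at hfac; omega
    · exact h
  have hnpos : 0 < n := by
    have : 0 < b - 1 := by omega
    positivity
  have hNpos : 0 < N := Nat.totient_pos.mpr hnpos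
  have hbN : 1 < b ^ N := Nat.one_lt_pow hNpos.ne' (by omega)
  -- coprimality of b and n
  have hcop2 : Nat.Coprime b u₂ := by
    by_contra h
    obtain ⟨p, hp, hpd⟩ := Nat.exists_prime_and_dvd h
    exact h₂ p hp (hpd.trans (Nat.gcd_dvd_right _ _)) (hpd.trans (Nat.gcd_dvd_left _ _))
  have hcop1 : Nat.Coprime b (b - 1) :=
    (Nat.coprime_self_sub_right (by omega)).mpr (Nat.coprime_one_right b)
  have hcopn : Nat.Coprime b n := (hcop2.pow_right 2).mul_right (hcop1.pow_right 2)
  -- Euler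
  have heuler : n ∣ b ^ N - 1 := by
    have h := Nat.ModEq.pow_totient hcopn
    exact (Nat.modEq_iff_dvd' hbN.le).mp h.symm
  -- geometric sum identity
  have hgeo : (b - 1) * S = b ^ N - 1 := by
    have h := geom_sum_mul (b : ℤ) N
    have h1 : (1 : ℕ) ≤ b := by omega
    rw [hSdef]
    zify [h1, hbN.le]
    rw [mul_comm]
    exact h
  have hS : u₂ ^ 2 * (b - 1) ∣ S := by
    have h : (b - 1) * (u₂ ^ 2 * (b - 1)) ∣ (b - 1) * S := by
      rw [hgeo, show (b-1) * (u₂ ^ 2 * (b-1)) = u₂ ^ 2 * (b-1)^2 by ring]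
      exact heuler
    exact (Nat.mul_dvd_mul_iff_left (show 0 < b - 1 by omega)).mp h
  have hu2S : u₂ ∣ S := ((dvd_pow_self u₂ two_ne_zero).mul_right _).trans hS
  have hu2A : u₂ ∣ A := Nat.dvd_add (hu2S.mul_left d₁) (hfac ▸ Dvd.intro_left u₁ rfl)
  have hu2M : u₂ ∣ M := ((dvd_pow_self u₂ two_ne_zero).mul_right _).trans heuler
  have hApos : 0 < A := lt_of_lt_of_le (show 0 < d₂ - d₁ by omega) (Nat.le_add_left _ _)
  have hMpos : 0 < M := by omega
  set g := Nat.gcd A M with hg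
  have hg0 : g ≠ 0 := Nat.gcd_ne_zero_right hMpos.ne'
  have hgM : g ∣ M := Nat.gcd_dvd_right _ _
  have hgA : g ∣ A := Nat.gcd_dvd_left _ _
  refine Nat.dvd_antisymm ?_ (Nat.dvd_gcd hu2A hu2M)
  rw [← Nat.factorization_le_iff_dvd hg0 hu2pos.ne']
  rw [Finsupp.le_def]
  intro p
  by_cases hp : p.Prime
  · set e := u₂.factorization p with he
    rw [← Nat.lt_succ_iff, ← Nat.not_le, ← Nat.Prime.pow_dvd_iff_le_factorization hp hg0]
    intro hdvd
    have hpg : p ∣ g := (dvd_pow_self p (Nat.succ_ne_zero e)).trans hdvd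
    have hpM : p ∣ M := hpg.trans hgM
    -- p does not divide b
    have hpb : ¬ p ∣ b := by
      intro hb'
      have h1 : p ∣ b ^ N := dvd_pow hb' hNpos.ne'
      have h2 : p ∣ b ^ N - M := Nat.dvd_sub h1 hpM
      rw [show b ^ N - M = 1 by omega] at h2
      exact hp.ne_one (Nat.dvd_one.mp h2)
    have hpu1 : ¬ p ∣ u₁ := fun h' => hpb (h₁ p hp h')
    -- p divides S
    have hpS : p ∣ S := by
      have h : p ∣ (b - 1) * S := by rw [hgeo]; exact hpM
      rcases hp.dvd_mul.mp h with h' | h'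
      · exact h'.trans (dvd_trans (dvd_mul_left (b-1) (u₂^2)) hS)
      · exact h'
    -- p^(e+1) divides S
    have hpS2 : p ^ (e + 1) ∣ S := by
      rcases Nat.eq_zero_or_pos e with h0 | h0
      · simpa [h0] using hpS
      · have h1 : p ^ e ∣ u₂ := Nat.ordProj_dvd u₂ p
        have h2 : (p ^ e) ^ 2 ∣ u₂ ^ 2 := pow_dvd_pow_of_dvd h1 2
        have h3 : p ^ (e + 1) ∣ (p ^ e) ^ 2 := by
          rw [← pow_mul]
          exact pow_dvd_pow p (by omega)
        exact (h3.trans h2).trans ((dvd_mul_right _ _).trans hS)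
    -- p^(e+1) divides u = d₂ - d₁
    have hpu : p ^ (e + 1) ∣ d₂ - d₁ := by
      have h1 : p ^ (e + 1) ∣ A := hdvd.trans hgA
      have h2 : p ^ (e + 1) ∣ d₁ * S := hpS2.mul_left d₁
      have h3 := Nat.dvd_sub h1 h2
      rwa [hA, Nat.add_sub_cancel_left] at h3
    rw [hfac] at hpu
    have hcopp : Nat.Coprime (p ^ (e + 1)) u₁ :=
      ((hp.coprime_iff_not_dvd).mpr hpu1).pow_left _
    have : p ^ (e + 1) ∣ u₂ := hcopp.dvd_of_dvd_mul_left hpu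
    exact Nat.pow_succ_factorization_not_dvd hu2pos.ne' hp this
  · simp [Nat.factorization_eq_zero_of_not_prime _ hp]
end

section
/- With notation as before (b ≥ 3, digits d_1 < d_2, u = d_2 − d_1 = u_1 u_2 with u_1 b-smooth and gcd(u_2, b) = 1), let N = φ(u_2^2(b−1)^2), m_1 = N − 1, v = d_1^{m_1}, w_1 = d_2 d_1^{m_1}, and let p_1/q_1 be the reduced form of (0.v \overline{w_1})_b. Then u_2 q_1 = b^N − 1. -/
/-- with `b ≥ 3`, digits `d₁ < d₂ ≤ b−1`, `u = d₂ − d₁ = u₁ u₂`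
(`u₁` `b`-smooth, `u₂` coprime to `b`), `N = φ(u₂²(b−1)²)`, `m₁ = N − 1`,
`v = d₁^{m₁}`, `w₁ = d₂ d₁^{m₁}`, and `p₁/q₁` the reduced form of
`(0.v ⟨w₁⟩)_b = ((v w₁)_b − (v)_b)/(b^{m₁}(b^{N} − 1))`, one has
`u₂ q₁ = b^N − 1`. -/
theorem stmt7 (b d₁ d₂ u₁ u₂ : ℕ) (hb : 3 ≤ b) (hd : d₁ < d₂) (hd₂ : d₂ ≤ b - 1)
    (hfac : d₂ - d₁ = u₁ * u₂)
    (h₁ : ∀ p : ℕ, p.Prime → p ∣ u₁ → p ∣ b)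
    (h₂ : ∀ p : ℕ, p.Prime → p ∣ u₂ → ¬ p ∣ b)
    (N m₁ : ℕ) (hN : N = Nat.totient (u₂ ^ 2 * (b - 1) ^ 2)) (hm₁ : m₁ = N - 1)
    (x : ℚ)
    (hx : x = ((Nat.ofDigits b
          (List.replicate m₁ d₁ ++ (d₂ :: List.replicate m₁ d₁)).reverse : ℚ) -
        (Nat.ofDigits b (List.replicate m₁ d₁).reverse : ℚ)) /
      ((b : ℚ) ^ m₁ * ((b : ℚ) ^ (m₁ + 1) - 1))) :
    u₂ * x.den = b ^ N - 1 := by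
  -- basic facts
  have hu₂0 : u₂ ≠ 0 := by
    rintro rfl
    obtain ⟨p, pp, pb⟩ := Nat.exists_prime_and_dvd (show b ≠ 1 by omega)
    exact h₂ p pp (dvd_zero p) pb
  have hcopbu₂ : Nat.Coprime b u₂ := by
    by_contra hg
    have hg0 : Nat.gcd b u₂ ≠ 0 := fun h => hu₂0 (Nat.eq_zero_of_gcd_eq_zero_right h)
    have pp : (Nat.gcd b u₂).minFac.Prime := Nat.minFac_prime hg
    exact h₂ _ pp ((Nat.minFac_dvd _).trans (Nat.gcd_dvd_right _ _))
      ((Nat.minFac_dvd _).trans (Nat.gcd_dvd_left _ _))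
  have hcopM : Nat.Coprime b (u₂ ^ 2 * (b - 1) ^ 2) := by
    have h1 : Nat.Coprime b (b - 1) := by
      have h := Nat.dvd_sub (Nat.gcd_dvd_left b (b - 1)) (Nat.gcd_dvd_right b (b - 1))
      have hb1 : b - (b - 1) = 1 := by omega
      rw [hb1] at h
      exact Nat.dvd_one.mp h
    exact (hcopbu₂.pow_right 2).mul_right (h1.pow_right 2)
  have hM0 : 0 < u₂ ^ 2 * (b - 1) ^ 2 := by
    have h1 : 0 < u₂ := Nat.pos_of_ne_zero hu₂0
    have h2 : 0 < b - 1 := by omega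
    positivity
  have hN1 : 1 ≤ N := by rw [hN]; exact Nat.totient_pos.mpr hM0
  have hmN : m₁ + 1 = N := by omega
  have hMdvd : u₂ ^ 2 * (b - 1) ^ 2 ∣ b ^ N - 1 := by
    have h := (Nat.ModEq.pow_totient hcopM).symm
    rw [← hN] at h
    exact (Nat.modEq_iff_dvd' (Nat.one_le_pow _ _ (by omega))).mp h
  -- geometric sums
  have hgeom : ∀ n : ℕ, (b - 1) * ∑ i ∈ Finset.range n, b ^ i = b ^ n - 1 := by
    intro n
    induction n with
    | zero => simp
    | succ n ih =>
      rw [Finset.sum_range_succ, Nat.mul_add, ih]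
      have h1 : 1 ≤ b ^ n := Nat.one_le_pow _ _ (by omega)
      have h2 : b ^ (n + 1) = b * b ^ n := by ring
      have h3 : (b - 1) * b ^ n = b * b ^ n - 1 * b ^ n := by rw [← Nat.sub_mul]
      have h4 : b ^ n ≤ b * b ^ n := Nat.le_mul_of_pos_left _ (by omega)
      omega
  set S : ℕ := ∑ i ∈ Finset.range N, b ^ i with hS
  set Sm : ℕ := ∑ i ∈ Finset.range m₁, b ^ i with hSm
  have hSb : (b - 1) * S = b ^ N - 1 := hgeom N
  have hSdvd : u₂ ^ 2 * (b - 1) ∣ S := by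
    have h' : (b - 1) * (u₂ ^ 2 * (b - 1)) ∣ (b - 1) * S := by
      rw [hSb]
      calc (b - 1) * (u₂ ^ 2 * (b - 1)) = u₂ ^ 2 * (b - 1) ^ 2 := by ring
        _ ∣ b ^ N - 1 := hMdvd
    exact (Nat.mul_dvd_mul_iff_left (by omega : 0 < b - 1)).mp h'
  have hu₂S : u₂ ∣ S := dvd_trans ⟨u₂ * (b - 1), by ring⟩ hSdvd
  set u : ℕ := d₂ - d₁ with hu
  set numN : ℕ := d₁ * S + u with hnumN
  set denN : ℕ := b ^ N - 1 with hdenN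
  have hbN : b ≤ b ^ N := Nat.le_self_pow (by omega) b
  have hdenN0 : 0 < denN := by rw [hdenN]; omega
  -- numerator identity
  have hsplit : ∀ n : ℕ, ∑ i ∈ Finset.range (n + 1), b ^ i
      = b * ∑ i ∈ Finset.range n, b ^ i + 1 := by
    intro n
    rw [Finset.sum_range_succ', Finset.mul_sum]
    simp [pow_succ']
  have hSsplit : S = b * Sm + 1 := by
    rw [hS, hSm, ← hmN]
    exact hsplit m₁
  have hnum_eq : numN = b * (d₁ * Sm) + d₂ := by
    have h1 : d₁ * (b * Sm + 1) = b * (d₁ * Sm) + d₁ := by ring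
    rw [hnumN, hSsplit, hu, h1]
    omega
  -- ofDigits of replicate
  have hrep : ∀ n : ℕ, Nat.ofDigits b (List.replicate n d₁)
      = d₁ * ∑ i ∈ Finset.range n, b ^ i := by
    intro n
    induction n with
    | zero => simp [Nat.ofDigits]
    | succ n ih =>
      rw [List.replicate_succ, Nat.ofDigits_cons, ih, hsplit]
      ring
  -- nat values of the two digit strings
  have hA : ((List.replicate m₁ d₁ ++ (d₂ :: List.replicate m₁ d₁)).reverse : List ℕ)
      = (List.replicate m₁ d₁ ++ [d₂]) ++ List.replicate m₁ d₁ := by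
    simp [List.reverse_append, List.reverse_replicate]
  have hAval : Nat.ofDigits b ((List.replicate m₁ d₁ ++ (d₂ :: List.replicate m₁ d₁)).reverse)
      = (d₁ * Sm + b ^ m₁ * d₂) + b ^ (m₁ + 1) * (d₁ * Sm) := by
    rw [hA, Nat.ofDigits_append, Nat.ofDigits_append, hrep, Nat.ofDigits_singleton]
    simp only [List.length_append, List.length_replicate, List.length_cons,
      List.length_nil, ← hSm]
  have hBval : Nat.ofDigits b ((List.replicate m₁ d₁).reverse) = d₁ * Sm := by
    rw [List.reverse_replicate, hrep, hSm]
  -- value of x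
  have hxval : x = (numN : ℚ) / (denN : ℚ) := by
    rw [hx, ← Nat.coe_ofDigits ℚ b, ← Nat.coe_ofDigits ℚ b, hAval, hBval]
    have hb0 : ((b : ℚ) ^ m₁) ≠ 0 := by positivity
    have hbig : ((b : ℚ) ^ (m₁ + 1) - 1) = (denN : ℚ) := by
      have h1 : 1 ≤ b ^ N := Nat.one_le_pow _ _ (by omega)
      rw [hdenN]
      push_cast [Nat.cast_sub h1, hmN]
      ring
    have hden0 : ((denN : ℚ)) ≠ 0 := Nat.cast_ne_zero.mpr hdenN0.ne'
    rw [hbig]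
    rw [div_eq_div_iff (by positivity) hden0]
    rw [hnum_eq]
    push_cast
    ring
  -- the reduced fraction
  have hu₂num : u₂ ∣ numN := by
    refine dvd_add (Dvd.dvd.mul_left hu₂S d₁) ?_
    rw [hfac]; exact dvd_mul_left _ _
  have hu₂den : u₂ ∣ denN := dvd_trans (dvd_trans (dvd_pow_self u₂ two_ne_zero)
    (Dvd.intro _ rfl)) (hdenN ▸ hMdvd)
  set a : ℕ := numN / u₂ with ha
  set c : ℕ := denN / u₂ with hc
  have hca : u₂ * a = numN := Nat.mul_div_cancel' hu₂num
  have hcc : u₂ * c = denN := Nat.mul_div_cancel' hu₂den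
  have hc0 : 0 < c := by
    rcases Nat.eq_zero_or_pos c with h | h
    · rw [h, Nat.mul_zero] at hcc; omega
    · exact h
  -- coprimality of a and c
  have hcop : Nat.Coprime a c := by
    by_contra hg
    have pp : (Nat.gcd a c).minFac.Prime := Nat.minFac_prime hg
    set p := (Nat.gcd a c).minFac with hp
    have hpa : p ∣ a := (Nat.minFac_dvd _).trans (Nat.gcd_dvd_left _ _)
    have hpc : p ∣ c := (Nat.minFac_dvd _).trans (Nat.gcd_dvd_right _ _)
    have hpnum : p * u₂ ∣ numN := by
      rw [← hca, mul_comm p u₂]; exact mul_dvd_mul_left u₂ hpa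
    have hpden : p * u₂ ∣ denN := by
      rw [← hcc, mul_comm p u₂]; exact mul_dvd_mul_left u₂ hpc
    have hpb : ¬ p ∣ b := by
      intro hdvd
      have h1 : p ∣ b ^ N := dvd_pow hdvd (by omega)
      have h2 : p ∣ denN := (dvd_mul_right p u₂).trans hpden
      have h3 : p ∣ b ^ N - denN := Nat.dvd_sub h1 h2
      have h4 : b ^ N - denN = 1 := by rw [hdenN]; omega
      rw [h4] at h3
      exact pp.one_lt.ne' (Nat.dvd_one.mp h3)
    set e := u₂.factorization p with he
    have hpe : p ^ e ∣ u₂ := Nat.ordProj_dvd u₂ p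
    have hpe1 : ¬ p ^ (e + 1) ∣ u₂ := Nat.pow_succ_factorization_not_dvd hu₂0 pp
    have hstep : p ^ (e + 1) ∣ p * u₂ := by
      rw [pow_succ, mul_comm]
      exact mul_dvd_mul (dvd_refl p) hpe
    have h1' : p ^ (e + 1) ∣ numN := hstep.trans hpnum
    have h2' : p ^ (e + 1) ∣ denN := hstep.trans hpden
    have hpS : p ^ (e + 1) ∣ S := by
      by_cases hp1 : p ∣ b - 1
      · have h4 : p ^ e * p ∣ u₂ * (b - 1) := mul_dvd_mul hpe hp1
        have h5 : u₂ * (b - 1) ∣ u₂ ^ 2 * (b - 1) :=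
          mul_dvd_mul (dvd_pow_self u₂ two_ne_zero) dvd_rfl
        have h6 : p ^ (e + 1) ∣ u₂ ^ 2 * (b - 1) := by
          rw [pow_succ]; exact h4.trans h5
        exact h6.trans hSdvd
      · have hcop1 : Nat.Coprime (p ^ (e + 1)) (b - 1) :=
          Nat.Coprime.pow_left _ ((Nat.Prime.coprime_iff_not_dvd pp).mpr hp1)
        have h3 : p ^ (e + 1) ∣ S * (b - 1) := by
          rw [mul_comm, hSb]; exact h2'
        exact hcop1.dvd_of_dvd_mul_right h3
    have hpu : p ^ (e + 1) ∣ u := by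
      have hd' : p ^ (e + 1) ∣ d₁ * S := Dvd.dvd.mul_left hpS d₁
      have h5 := Nat.dvd_sub h1' hd'
      have h6 : numN - d₁ * S = u := by rw [hnumN]; omega
      rw [h6] at h5
      exact h5
    have hpu₁ : ¬ p ∣ u₁ := fun h => hpb (h₁ p pp h)
    have hcop2 : Nat.Coprime (p ^ (e + 1)) u₁ :=
      Nat.Coprime.pow_left _ ((Nat.Prime.coprime_iff_not_dvd pp).mpr hpu₁)
    rw [hfac, mul_comm] at hpu
    exact hpe1 (hcop2.dvd_of_dvd_mul_right hpu)
  -- compute the denominator of x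
  have hu₂Q : (u₂ : ℚ) ≠ 0 := Nat.cast_ne_zero.mpr hu₂0
  have hxac : x = ((a : ℤ) : ℚ) / ((c : ℤ) : ℚ) := by
    rw [hxval, ← hca, ← hcc]
    push_cast
    rw [mul_div_mul_left _ _ hu₂Q]
  have hden : (x.den : ℤ) = (c : ℤ) := by
    rw [hxac]
    exact Rat.den_div_eq_of_coprime (by exact_mod_cast hc0) (by simpa using hcop)
  have hxden : x.den = c := by exact_mod_cast hden
  rw [hxden, hcc, hdenN]
end
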